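/- Fix 0 < R < 1 and ε > 0 with 1 - R - ε > 0, a positive integer ℓ, and a prime power q with q ≥ max(ℓ^{8R/ε + 6}, ℓ·2^{4/ε}). Let n be a positive integer with Rn an integer, and let C ⊆ F_q^n be a random linear code of rate R. Then with probability at least 1 - 2q^{-εn/8}, the code C is (1-R-ε, ℓ, L)-list-recoverable with L ≤ (2ℓ/ε)^{2ℓ/ε}. -/

import Mathlib

/-- The agreement set `agr(x, S₁,…,Sₙ) = {i : xᵢ ∈ Sᵢ}`. -/
def agr {F : Type*} [DecidableEq F] {n : ℕ} (x : Fin n → F) (S : Fin n → Finset F) :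
    Finset (Fin n) :=
  Finset.univ.filter fun i => x i ∈ S i

/-- A code `C ⊆ F^n` is `(ρ, ℓ, L)`-list-recoverable if for every choice of input lists
`S₁,…,Sₙ ⊆ F` of size `ℓ`, the number of codewords in the `ρ`-radius list-recovery ball
(those agreeing with the lists on at least a `(1-ρ)` fraction of coordinates) is at most `L`. -/
def ListRecoverable {F : Type*} [DecidableEq F] {n : ℕ} (C : Set (Fin n → F))
    (ρ : ℝ) (ℓ L : ℕ) : Prop :=
  ∀ S : Fin n → Finset F, (∀ i, (S i).card = ℓ) →
    ({x ∈ C | (1 - ρ) * (n : ℝ) ≤ ((agr x S).card : ℝ)}).ncard ≤ L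

set_option linter.unusedSectionVars false
set_option maxHeartbeats 1000000

open Finset

section counting
variable {F : Type*} [Field F] [Fintype F] [DecidableEq F]

/-- Union-bound count of vectors with agreement at least `t`. -/
lemma count_agr_ge {n : ℕ} (S : Fin n → Finset F) (b t : ℕ) (hS : ∀ i, (S i).card ≤ b) :
    (Finset.univ.filter fun x : Fin n → F => t ≤ (agr x S).card).card
      ≤ n.choose t * (b ^ t * (Fintype.card F) ^ (n - t)) := by
  classical
  have hsub : (Finset.univ.filter fun x : Fin n → F => t ≤ (agr x S).card) ⊆
      (Finset.univ.powersetCard t).biUnion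
        (fun I => Fintype.piFinset (fun i => if i ∈ I then S i else Finset.univ)) := by
    intro x hx
    simp only [mem_filter] at hx
    obtain ⟨I, hI, hIcard⟩ := Finset.exists_subset_card_eq hx.2
    refine Finset.mem_biUnion.2 ⟨I, Finset.mem_powersetCard.2 ⟨Finset.subset_univ _, hIcard⟩, ?_⟩
    rw [Fintype.mem_piFinset]
    intro i
    by_cases h : i ∈ I
    · have := hI h
      simp only [agr, mem_filter] at this
      simp [h, this.2]
    · simp [h]
  have hpi : ∀ I ∈ Finset.univ.powersetCard t,
      (Fintype.piFinset (fun i => if i ∈ I then S i else (Finset.univ : Finset F))).card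
        ≤ b ^ t * (Fintype.card F) ^ (n - t) := by
    intro I hI
    obtain ⟨-, hIc⟩ := Finset.mem_powersetCard.1 hI
    rw [Fintype.card_piFinset]
    have : ∀ i : Fin n, (if i ∈ I then S i else (Finset.univ : Finset F)).card
        = if i ∈ I then (S i).card else Fintype.card F := by
      intro i; by_cases h : i ∈ I <;> simp [h]
    rw [Finset.prod_congr rfl (fun i _ => this i)]
    rw [← Finset.prod_mul_prod_compl I]
    have h1 : (∏ i ∈ I, if i ∈ I then (S i).card else Fintype.card F) ≤ b ^ t := by
      calc (∏ i ∈ I, if i ∈ I then (S i).card else Fintype.card F)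
          ≤ ∏ _i ∈ I, b := by
            apply Finset.prod_le_prod' 
            intro i hi; simp [hi]; exact hS i
        _ = b ^ t := by rw [Finset.prod_const, hIc]
    have h2 : (∏ i ∈ Iᶜ, if i ∈ I then (S i).card else Fintype.card F)
        = (Fintype.card F) ^ (n - t) := by
      have : ∀ i ∈ Iᶜ, (if i ∈ I then (S i).card else Fintype.card F) = Fintype.card F := by
        intro i hi; simp [Finset.mem_compl.1 hi]
      rw [Finset.prod_congr rfl this, Finset.prod_const, Finset.card_compl, hIc,
        Fintype.card_fin]
    rw [h2]
    exact Nat.mul_le_mul_right _ h1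
  calc (Finset.univ.filter fun x : Fin n → F => t ≤ (agr x S).card).card
      ≤ ((Finset.univ.powersetCard t).biUnion
        (fun I => Fintype.piFinset (fun i => if i ∈ I then S i else Finset.univ))).card :=
        Finset.card_le_card hsub
    _ ≤ ∑ I ∈ Finset.univ.powersetCard t,
        (Fintype.piFinset (fun i => if i ∈ I then S i else (Finset.univ : Finset F))).card :=
        Finset.card_biUnion_le
    _ ≤ ∑ _I ∈ Finset.univ.powersetCard t, b ^ t * (Fintype.card F) ^ (n - t) :=
        Finset.sum_le_sum hpi
    _ = n.choose t * (b ^ t * (Fintype.card F) ^ (n - t)) := by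
        rw [Finset.sum_const, Finset.card_powersetCard, Finset.card_univ, Fintype.card_fin,
          smul_eq_mul]

end counting


section fiber
variable {F : Type*} [Field F] [Fintype F] [DecidableEq F]

lemma choose_le_two_pow (n k : ℕ) : n.choose k ≤ 2 ^ n := by
  rcases le_or_gt k n with h | h
  · calc n.choose k ≤ ∑ m ∈ Finset.range (n + 1), n.choose m :=
        Finset.single_le_sum (fun i _ => Nat.zero_le _) (Finset.mem_range.2 (Nat.lt_succ_of_le h))
    _ = 2 ^ n := Nat.sum_range_choose n
  · rw [Nat.choose_eq_zero_of_lt h]; exact Nat.zero_le _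

/-- The number of matrices whose images of `m` fixed linearly independent vectors all lie
in a fixed set `T`, times `|F|^(n*m)`, equals `|T|^m * #matrices`. -/
lemma count_matrix_event {n k m : ℕ} (y : Fin m → (Fin k → F)) (hy : LinearIndependent F y)
    (T : Finset (Fin n → F)) :
    (Finset.univ.filter fun G : Matrix (Fin n) (Fin k) F =>
        ∀ j, G.mulVec (y j) ∈ T).card * Fintype.card (Fin m → Fin n → F)
      = T.card ^ m * Fintype.card (Matrix (Fin n) (Fin k) F) := by
  classical
  -- the linear map G ↦ (G y₁, ..., G yₘ)
  let Φ : Matrix (Fin n) (Fin k) F →ₗ[F] (Fin m → Fin n → F) :=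
    { toFun := fun G => fun j => G.mulVec (y j)
      map_add' := by intro A B; funext j; exact Matrix.add_mulVec A B (y j)
      map_smul' := by intro c A; funext j; exact Matrix.smul_mulVec c A (y j) }
  -- a left inverse functional system
  have hinj : LinearMap.ker (Fintype.linearCombination F y) = ⊥ := by
    rw [LinearMap.ker_eq_bot']
    intro c hc
    rw [Fintype.linearCombination_apply] at hc
    funext i
    exact (Fintype.linearIndependent_iff.1 hy) c hc i
  obtain ⟨g, hg⟩ := LinearMap.exists_leftInverse_of_injective _ hinj
  have hgy : ∀ j, g (y j) = Pi.single j 1 := by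
    intro j
    have h1 : (Fintype.linearCombination F y) (Pi.single j 1) = y j := by
      rw [Fintype.linearCombination_apply_single, one_smul]
    have h2 := LinearMap.congr_fun hg (Pi.single j 1 : Fin m → F)
    rw [LinearMap.comp_apply, h1, LinearMap.id_apply] at h2
    exact h2
  have hsurj : Function.Surjective Φ := by
    intro z
    refine ⟨Matrix.of (fun r c => ∑ j, z j r * g (Pi.single c 1) j), ?_⟩
    have hgv : ∀ (v : Fin k → F) (j' : Fin m), g v j' = ∑ c, v c * g (Pi.single c 1) j' := by
      intro v j'
      have hv : v = ∑ c, v c • (Pi.single c 1 : Fin k → F) := by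
        funext i
        simp [Finset.sum_apply, Pi.single_apply]
      conv_lhs => rw [hv]
      rw [map_sum]
      simp [Finset.sum_apply, smul_eq_mul]
    funext j r
    show (∑ c, (∑ j', z j' r * g (Pi.single c 1) j') * y j c) = z j r
    have : ∀ c : Fin k, (∑ j', z j' r * g (Pi.single c 1) j') * y j c
        = ∑ j', z j' r * (y j c * g (Pi.single c 1) j') := by
      intro c; rw [Finset.sum_mul]; apply Finset.sum_congr rfl; intro j' _; ring
    rw [Finset.sum_congr rfl (fun c _ => this c), Finset.sum_comm]
    have : ∀ j' : Fin m, (∑ c, z j' r * (y j c * g (Pi.single c 1) j'))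
        = z j' r * g (y j) j' := by
      intro j'
      rw [← Finset.mul_sum, hgv (y j) j']
    rw [Finset.sum_congr rfl (fun j' _ => this j')]
    simp [hgy j, Pi.single_apply]
  -- fibers of Φ all have the same cardinality
  have hfib : ∀ z : Fin m → Fin n → F,
      (Finset.univ.filter fun G => Φ G = z).card
        = (Finset.univ.filter fun G => Φ G = 0).card := by
    intro z
    obtain ⟨G₀, hG₀⟩ := hsurj z
    apply Finset.card_nbij' (fun G => G - G₀) (fun G => G + G₀)
    · intro a ha
      simp only [Finset.mem_coe, Finset.mem_filter, Finset.mem_univ, true_and] at ha ⊢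
      rw [map_sub, ha, hG₀, sub_self]
    · intro a ha
      simp only [Finset.mem_coe, Finset.mem_filter, Finset.mem_univ, true_and] at ha ⊢
      rw [map_add, ha, hG₀, zero_add]
    · intro a _; simp
    · intro a _; simp
  -- counting events through fibers
  have hcount : ∀ U : Finset (Fin m → Fin n → F),
      (Finset.univ.filter fun G => Φ G ∈ U).card
        = U.card * (Finset.univ.filter fun G => Φ G = 0).card := by
    intro U
    have := Finset.card_eq_sum_card_fiberwise
      (f := fun G : Matrix (Fin n) (Fin k) F => Φ G)
      (s := Finset.univ.filter fun G => Φ G ∈ U) (t := U)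
      (fun x hx => (Finset.mem_filter.1 hx).2)
    rw [this]
    have : ∀ z ∈ U, ((Finset.univ.filter fun G => Φ G ∈ U).filter
        fun G => Φ G = z).card = (Finset.univ.filter fun G => Φ G = 0).card := by
      intro z hz
      rw [Finset.filter_filter]
      have : (Finset.univ.filter fun G => Φ G ∈ U ∧ Φ G = z)
          = (Finset.univ.filter fun G => Φ G = z) := by
        apply Finset.filter_congr
        intro G _
        constructor
        · exact fun h => h.2
        · exact fun h => ⟨h ▸ hz, h⟩
      rw [this, hfib z]
    rw [Finset.sum_congr rfl this, Finset.sum_const, smul_eq_mul]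
  -- event as membership in a product set
  have hev : (Finset.univ.filter fun G : Matrix (Fin n) (Fin k) F =>
      ∀ j, G.mulVec (y j) ∈ T)
      = (Finset.univ.filter fun G => Φ G ∈ Fintype.piFinset (fun _ : Fin m => T)) := by
    apply Finset.filter_congr
    intro G _
    rw [Fintype.mem_piFinset]
    rfl
  have h1 := hcount (Fintype.piFinset (fun _ : Fin m => T))
  have h2 := hcount Finset.univ
  rw [Finset.filter_true_of_mem (fun _ _ => Finset.mem_univ _)] at h2
  simp only [Finset.card_univ] at h2
  rw [hev, h1, Fintype.card_piFinset]
  rw [Finset.prod_const, Finset.card_univ, Fintype.card_fin]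
  calc T.card ^ m * (Finset.univ.filter fun G => Φ G = 0).card
        * Fintype.card (Fin m → Fin n → F)
      = T.card ^ m * (Fintype.card (Fin m → Fin n → F)
          * (Finset.univ.filter fun G => Φ G = 0).card) := by ring
    _ = T.card ^ m * Fintype.card (Matrix (Fin n) (Fin k) F) := by rw [← h2]

end fiber


section flat
variable {F : Type*} [Field F] [Fintype F] [DecidableEq F]

/-- Key deterministic lemma: in an affine translate of a subspace `W ≤ F^n` all of whose
nonzero vectors have few zero coordinates, there are few vectors with large agreement. -/
lemma flat_bound (ε : ℝ) (hε : 0 < ε) {n : ℕ} (hn : 0 < n) (ℓ : ℕ)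
    (hK : 1 ≤ 2 * (ℓ : ℝ) / ε)
    (τ Z : ℝ) (hτZ : Z + ε / 2 * n ≤ τ)
    (S : Fin n → Finset F) (hS : ∀ i, (S i).card = ℓ) :
    ∀ (d : ℕ) (W : Submodule F (Fin n → F)),
      (∀ w ∈ W, w ≠ 0 → ((Finset.univ.filter fun i => w i = (0:F)).card : ℝ) ≤ Z) →
      Module.finrank F W ≤ d →
      ∀ (v₀ : Fin n → F) (B : Finset (Fin n → F)),
        (∀ x ∈ B, τ ≤ ((agr x S).card : ℝ) ∧ x - v₀ ∈ W) →
        (B.card : ℝ) ≤ (2 * (ℓ : ℝ) / ε) ^ d := by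
  intro d
  induction d with
  | zero =>
    intro W hW hrank v₀ B hB
    have hWbot : W = ⊥ := by
      rw [← Submodule.finrank_eq_zero (R := F) (M := Fin n → F)]
      omega
    have : B.card ≤ 1 := by
      apply Finset.card_le_one.2
      intro a ha b hb
      have ha' := (hB a ha).2
      have hb' := (hB b hb).2
      rw [hWbot, Submodule.mem_bot, sub_eq_zero] at ha' hb'
      rw [ha', hb']
    rw [pow_zero]
    exact_mod_cast this
  | succ d ih =>
    intro W hW hrank v₀ B hB
    by_cases hbot : W = ⊥
    · have : B.card ≤ 1 := by
        apply Finset.card_le_one.2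
        intro a ha b hb
        have ha' := (hB a ha).2
        have hb' := (hB b hb).2
        rw [hbot, Submodule.mem_bot, sub_eq_zero] at ha' hb'
        rw [ha', hb']
      calc (B.card : ℝ) ≤ 1 := by exact_mod_cast this
        _ ≤ (2 * (ℓ : ℝ) / ε) ^ (d + 1) := one_le_pow₀ hK
    · obtain ⟨w₀, hw₀W, hw₀⟩ := Submodule.exists_mem_ne_zero_of_ne_bot hbot
      have hKpos : (0:ℝ) < 2 * (ℓ : ℝ) / ε := lt_of_lt_of_le one_pos hK
      have hI₀ : ((Finset.univ.filter fun i => w₀ i = (0:F)).card : ℝ) ≤ Z :=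
        hW w₀ hw₀W hw₀
      -- step 1: total agreement is large
      have hsum1 : τ * B.card ≤ ∑ x ∈ B, ((agr x S).card : ℝ) := by
        calc τ * B.card = ∑ _x ∈ B, τ := by rw [Finset.sum_const, nsmul_eq_mul]; ring
          _ ≤ _ := Finset.sum_le_sum (fun x hx => (hB x hx).1)
      -- step 2: exchange sums
      have hsum2 : ∑ x ∈ B, ((agr x S).card : ℝ)
          = ∑ i : Fin n, ((B.filter fun x => x i ∈ S i).card : ℝ) := by
        have h : ∑ x ∈ B, (agr x S).card
            = ∑ i : Fin n, (B.filter fun x => x i ∈ S i).card := by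
          have h1 : ∀ x ∈ B, (agr x S).card = ∑ i : Fin n, if x i ∈ S i then 1 else 0 := by
            intro x _
            rw [agr, Finset.card_filter]
          rw [Finset.sum_congr rfl h1, Finset.sum_comm]
          exact Finset.sum_congr rfl (fun i _ => (Finset.card_filter _ _).symm)
        exact_mod_cast congrArg (fun z : ℕ => (z : ℝ)) h
      -- step 3: fiber bound for moving coordinates
      have hfiber : ∀ i : Fin n, w₀ i ≠ 0 →
          ((B.filter fun x => x i ∈ S i).card : ℝ) ≤ (ℓ : ℝ) * (2 * (ℓ : ℝ) / ε) ^ d := by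
        intro i hi
        have hfw : (B.filter fun x => x i ∈ S i).card
            = ∑ s ∈ S i, ((B.filter fun x => x i ∈ S i).filter fun x => x i = s).card :=
          Finset.card_eq_sum_card_fiberwise (f := fun x : Fin n → F => x i) (t := S i)
            (fun x hx => (Finset.mem_filter.1 hx).2)
        have hfs : ∀ s ∈ S i,
            ((((B.filter fun x => x i ∈ S i)).filter fun x => x i = s).card : ℝ)
              ≤ (2 * (ℓ : ℝ) / ε) ^ d := by
          intro s hs
          set B' := (B.filter fun x => x i ∈ S i).filter (fun x => x i = s) with hB'def
          rcases Finset.eq_empty_or_nonempty B' with he | hne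
          · rw [he]
            simp only [Finset.card_empty, Nat.cast_zero]
            positivity
          · obtain ⟨x₀, hx₀⟩ := hne
            have hx₀B : x₀ ∈ B := (Finset.mem_filter.1 (Finset.mem_filter.1 hx₀).1).1
            have hx₀i : x₀ i = s := (Finset.mem_filter.1 hx₀).2
            have hlt : W ⊓ LinearMap.ker (LinearMap.proj (R := F) (φ := fun _ : Fin n => F) i)
                < W := by
              apply lt_of_le_of_ne inf_le_left
              intro hEq
              apply hi
              have hmem : w₀ ∈ W ⊓ LinearMap.ker
                  (LinearMap.proj (R := F) (φ := fun _ : Fin n => F) i) := by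
                rw [hEq]; exact hw₀W
              have h2 := (Submodule.mem_inf.1 hmem).2
              rw [LinearMap.mem_ker] at h2
              exact h2
            have hrank' : Module.finrank F
                ↥(W ⊓ LinearMap.ker (LinearMap.proj (R := F) (φ := fun _ : Fin n => F) i))
                ≤ d := by
              have h3 := Submodule.finrank_lt_finrank_of_lt hlt
              exact Nat.lt_succ_iff.mp (lt_of_lt_of_le h3 hrank)
            apply ih _ (fun w hw hw0 => hW w (Submodule.mem_inf.1 hw).1 hw0) hrank' x₀ B'
            intro x hx
            have hxB : x ∈ B := (Finset.mem_filter.1 (Finset.mem_filter.1 hx).1).1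
            have hxi : x i = s := (Finset.mem_filter.1 hx).2
            refine ⟨(hB x hxB).1, Submodule.mem_inf.2 ⟨?_, ?_⟩⟩
            · have h1 := (hB x hxB).2
              have h2 := (hB x₀ hx₀B).2
              have : x - x₀ = (x - v₀) - (x₀ - v₀) := by ring
              rw [this]
              exact Submodule.sub_mem W h1 h2
            · rw [LinearMap.mem_ker]
              show x i - x₀ i = 0
              rw [hxi, hx₀i, sub_self]
        calc ((B.filter fun x => x i ∈ S i).card : ℝ)
            = ∑ s ∈ S i, ((((B.filter fun x => x i ∈ S i)).filter fun x => x i = s).card : ℝ) := by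
              rw [hfw]; push_cast; ring
          _ ≤ ∑ _s ∈ S i, (2 * (ℓ : ℝ) / ε) ^ d := Finset.sum_le_sum hfs
          _ = (ℓ : ℝ) * (2 * (ℓ : ℝ) / ε) ^ d := by
              rw [Finset.sum_const, nsmul_eq_mul, hS i]
      -- step 4: assemble
      have hsplit : ∑ i : Fin n, ((B.filter fun x => x i ∈ S i).card : ℝ)
          ≤ Z * B.card + (n : ℝ) * ((ℓ : ℝ) * (2 * (ℓ : ℝ) / ε) ^ d) := by
        rw [← Finset.sum_filter_add_sum_filter_not Finset.univ (fun i => w₀ i = (0:F))]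
        have hA : ∑ i ∈ Finset.univ.filter (fun i => w₀ i = (0:F)),
            ((B.filter fun x => x i ∈ S i).card : ℝ) ≤ Z * B.card := by
          calc ∑ i ∈ Finset.univ.filter (fun i => w₀ i = (0:F)),
              ((B.filter fun x => x i ∈ S i).card : ℝ)
              ≤ ∑ _i ∈ Finset.univ.filter (fun i => w₀ i = (0:F)), (B.card : ℝ) := by
                apply Finset.sum_le_sum
                intro i _
                exact_mod_cast Finset.card_le_card (Finset.filter_subset _ _)
            _ = ((Finset.univ.filter fun i => w₀ i = (0:F)).card : ℝ) * B.card := by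
                rw [Finset.sum_const, nsmul_eq_mul]
            _ ≤ Z * B.card := by
                apply mul_le_mul_of_nonneg_right hI₀ (Nat.cast_nonneg _)
        have hBc : ∑ i ∈ Finset.univ.filter (fun i => ¬ w₀ i = (0:F)),
            ((B.filter fun x => x i ∈ S i).card : ℝ)
              ≤ (n : ℝ) * ((ℓ : ℝ) * (2 * (ℓ : ℝ) / ε) ^ d) := by
          calc ∑ i ∈ Finset.univ.filter (fun i => ¬ w₀ i = (0:F)),
              ((B.filter fun x => x i ∈ S i).card : ℝ)
              ≤ ∑ _i ∈ Finset.univ.filter (fun i => ¬ w₀ i = (0:F)),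
                  ((ℓ : ℝ) * (2 * (ℓ : ℝ) / ε) ^ d) := by
                apply Finset.sum_le_sum
                intro i hi
                exact hfiber i (Finset.mem_filter.1 hi).2
            _ = ((Finset.univ.filter fun i => ¬ w₀ i = (0:F)).card : ℝ)
                  * ((ℓ : ℝ) * (2 * (ℓ : ℝ) / ε) ^ d) := by
                rw [Finset.sum_const, nsmul_eq_mul]
            _ ≤ (n : ℝ) * ((ℓ : ℝ) * (2 * (ℓ : ℝ) / ε) ^ d) := by
                apply mul_le_mul_of_nonneg_right _ (by positivity)
                have : (Finset.univ.filter fun i => ¬ w₀ i = (0:F)).card ≤ n := by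
                  calc (Finset.univ.filter fun i => ¬ w₀ i = (0:F)).card
                      ≤ (Finset.univ : Finset (Fin n)).card := Finset.card_le_card
                        (Finset.filter_subset _ _)
                    _ = n := by rw [Finset.card_univ, Fintype.card_fin]
                exact_mod_cast this
        linarith
      have hstep : ε / 2 * n * B.card ≤ (n : ℝ) * ((ℓ : ℝ) * (2 * (ℓ : ℝ) / ε) ^ d) := by
        have h1 : (Z + ε / 2 * n) * B.card ≤ τ * B.card :=
          mul_le_mul_of_nonneg_right hτZ (Nat.cast_nonneg _)
        have h2 := hsum1.trans (le_of_eq hsum2)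
        have hexp : (Z + ε / 2 * n) * (B.card : ℝ)
            = Z * B.card + ε / 2 * n * B.card := by ring
        linarith [hsplit]
      have hfinal : (B.card : ℝ) ≤ (2 * (ℓ : ℝ) / ε) * (2 * (ℓ : ℝ) / ε) ^ d := by
        have hpos : (0:ℝ) < ε / 2 * n := by positivity
        set X : ℝ := (2 * (ℓ : ℝ) / ε) ^ d with hX
        have hEq : (2 * (ℓ : ℝ) / ε) * X * (ε / 2 * n) = (n : ℝ) * ((ℓ : ℝ) * X) := by
          field_simp
        apply le_of_mul_le_mul_right _ hpos
        calc (B.card : ℝ) * (ε / 2 * n) = ε / 2 * n * B.card := by ring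
          _ ≤ (n : ℝ) * ((ℓ : ℝ) * X) := hstep
          _ = (2 * (ℓ : ℝ) / ε) * X * (ε / 2 * n) := hEq.symm
      calc (B.card : ℝ) ≤ (2 * (ℓ : ℝ) / ε) * (2 * (ℓ : ℝ) / ε) ^ d := hfinal
        _ = (2 * (ℓ : ℝ) / ε) ^ (d + 1) := by rw [pow_succ]; ring

end flat

section det
variable {F : Type*} [Field F] [Fintype F] [DecidableEq F]

lemma det_listRecoverable
    (R ε : ℝ) (hε : 0 < ε) {n k : ℕ} (hn : 0 < n) (ℓ : ℕ)
    (hK : 1 ≤ 2 * (ℓ : ℝ) / ε) (m : ℕ) (hm1 : 1 ≤ m)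
    (hm2 : ((m : ℝ) - 1) ≤ 2 * (ℓ : ℝ) / ε)
    (G : Matrix (Fin n) (Fin k) F)
    (hdist : ∀ c ∈ LinearMap.range (Matrix.mulVecLin G), c ≠ 0 →
      ((Finset.univ.filter fun i => c i = (0:F)).card : ℝ) ≤ (R + ε/2) * n)
    (hno : ∀ (S : Fin n → Finset F), (∀ i, (S i).card = ℓ) →
      ∀ x : Fin m → (Fin n → F),
        (∀ j, x j ∈ LinearMap.range (Matrix.mulVecLin G) ∧
          (R + ε) * n ≤ ((agr (x j) S).card : ℝ)) → ¬ LinearIndependent F x) :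
    ListRecoverable (LinearMap.range (Matrix.mulVecLin G) : Set (Fin n → F)) (1 - R - ε) ℓ
      ⌊(2 * (ℓ : ℝ) / ε) ^ (2 * (ℓ : ℝ) / ε)⌋₊ := by
  classical
  intro S hS
  set C := LinearMap.range (Matrix.mulVecLin G) with hC
  set Bf : Finset (Fin n → F) :=
    Finset.univ.filter (fun x => x ∈ C ∧ (R + ε) * n ≤ ((agr x S).card : ℝ)) with hBf
  have hset : {x ∈ (C : Set (Fin n → F)) | (1 - (1 - R - ε)) * (n:ℝ) ≤ ((agr x S).card : ℝ)}
      = (Bf : Set (Fin n → F)) := by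
    ext x
    have harith : (1 - (1 - R - ε)) * (n:ℝ) = (R + ε) * n := by ring
    simp only [hBf, Finset.coe_filter, Set.mem_setOf_eq, Finset.mem_univ, true_and,
      Set.mem_sep_iff, SetLike.mem_coe, harith]
  rw [hset, Set.ncard_coe_finset]
  -- the span of the ball codewords
  have hsub : (Bf : Set (Fin n → F)) ⊆ (C : Set (Fin n → F)) := by
    intro x hx
    have := (Finset.mem_filter.1 hx).2.1
    exact this
  have hWle : Submodule.span F (Bf : Set (Fin n → F)) ≤ C := Submodule.span_le.2 hsub
  have hrank : Module.finrank F (Submodule.span F (Bf : Set (Fin n → F))) ≤ m - 1 := by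
    by_contra hcon
    push_neg at hcon
    have hm : m ≤ Module.finrank F (Submodule.span F (Bf : Set (Fin n → F))) := by omega
    obtain ⟨b, hbsub, hbspan, hbind⟩ := exists_linearIndependent F (Bf : Set (Fin n → F))
    have hbfin : b.Finite := Bf.finite_toSet.subset hbsub
    haveI := hbfin.fintype
    have hble : Module.finrank F (Submodule.span F b) ≤ b.toFinset.card :=
      finrank_span_le_card b
    rw [hbspan] at hble
    have hcard : m ≤ b.toFinset.card := le_trans hm hble
    obtain ⟨s', hs'sub, hs'card⟩ := Finset.exists_subset_card_eq hcard
    let e := Finset.equivFinOfCardEq hs'card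
    have hmemb : ∀ j : Fin m, ((e.symm j : { x // x ∈ s' }) : Fin n → F) ∈ b := by
      intro j
      exact Set.mem_toFinset.1 (hs'sub (e.symm j).2)
    let f : Fin m → ↥b := fun j => ⟨((e.symm j : { x // x ∈ s' }) : Fin n → F), hmemb j⟩
    have hfinj : Function.Injective f := by
      intro j j' hjj
      apply e.symm.injective
      apply Subtype.ext
      exact congrArg (Subtype.val : ↥b → (Fin n → F)) hjj
    have hind : LinearIndependent F (fun j => ((f j : Fin n → F))) := by
      exact hbind.comp f hfinj
    apply hno S hS (fun j => (f j : Fin n → F)) ?_ hind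
    intro j
    have hjB : ((f j : Fin n → F)) ∈ Bf := hbsub (hmemb j)
    have := (Finset.mem_filter.1 hjB).2
    exact this
  -- apply the flat lemma
  have hτZ : (R + ε/2) * n + ε / 2 * n ≤ (R + ε) * n := le_of_eq (by ring)
  have hbound := flat_bound ε hε hn ℓ hK ((R + ε) * n) ((R + ε/2) * n) hτZ S hS
    (m - 1) (Submodule.span F (Bf : Set (Fin n → F)))
    (fun w hw hw0 => hdist w (hWle hw) hw0) hrank 0 Bf ?_
  · -- conclude
    have h1 : ((2 * (ℓ:ℝ) / ε)) ^ (m - 1 : ℕ) ≤ (2 * (ℓ:ℝ) / ε) ^ (2 * (ℓ:ℝ) / ε) := by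
      rw [← Real.rpow_natCast (2 * (ℓ:ℝ) / ε) (m - 1)]
      apply Real.rpow_le_rpow_of_exponent_le hK
      have hc : ((m - 1 : ℕ) : ℝ) = (m : ℝ) - 1 := by
        push_cast [Nat.cast_sub hm1]
        ring
      rw [hc]
      exact hm2
    exact Nat.le_floor (le_trans hbound h1)
  · intro x hx
    refine ⟨(Finset.mem_filter.1 hx).2.2, ?_⟩
    rw [sub_zero]
    exact Submodule.subset_span hx
end det
section prob
variable {F : Type*} [Field F] [Fintype F] [DecidableEq F]

lemma two_pow_le_rpow {q ε : ℝ} (hε : 0 < ε) (hq : (2:ℝ) ^ ((4:ℝ)/ε) ≤ q) (n : ℕ) :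
    (2:ℝ) ^ (n:ℕ) ≤ q ^ (ε * (n:ℝ) / 4 : ℝ) := by
  have h2 : (0:ℝ) ≤ (2:ℝ) ^ ((4:ℝ)/ε) := Real.rpow_nonneg (by norm_num) _
  have hstep : ((2:ℝ) ^ ((4:ℝ)/ε)) ^ (ε * (n:ℝ) / 4 : ℝ) ≤ q ^ (ε * (n:ℝ) / 4 : ℝ) :=
    Real.rpow_le_rpow h2 hq (by positivity)
  calc (2:ℝ) ^ (n:ℕ) = (2:ℝ) ^ ((n:ℕ):ℝ) := (Real.rpow_natCast 2 n).symm
    _ = ((2:ℝ) ^ ((4:ℝ)/ε)) ^ (ε * (n:ℝ) / 4 : ℝ) := by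
        rw [← Real.rpow_mul (by norm_num)]
        congr 1
        field_simp
    _ ≤ q ^ (ε * (n:ℝ) / 4 : ℝ) := hstep

lemma zeros_eq_agr {n : ℕ} (x : Fin n → F) :
    (Finset.univ.filter fun i => x i = (0:F)) = agr x (fun _ => ({0} : Finset F)) := by
  apply Finset.filter_congr
  intro i _
  simp

lemma E1_bound (R ε : ℝ) (hε : 0 < ε) (hcap : 0 < 1 - R - ε) (hR0 : 0 < R)
    (ℓ q : ℕ) (hℓ : 0 < ℓ)
    (hF : Fintype.card F = q)
    (hq2 : (ℓ:ℝ) * (2:ℝ) ^ ((4:ℝ)/ε) ≤ (q:ℝ))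
    (n k : ℕ) (hn : 0 < n) (hk : (k:ℝ) = R * n)
    (E : Finset (Matrix (Fin n) (Fin k) F))
    (hE : ∀ G ∈ E, ∃ y : Fin k → F, G.mulVec y ≠ 0 ∧
      ⌈(R + ε/2) * (n:ℝ)⌉₊ ≤ (Finset.univ.filter fun i => (G.mulVec y) i = (0:F)).card) :
    (E.card : ℝ)
      ≤ (q:ℝ) ^ (-(ε * (n:ℝ)) / 8 : ℝ) * (Fintype.card (Matrix (Fin n) (Fin k) F) : ℝ) := by
  classical
  have hl1 : (1:ℝ) ≤ (ℓ:ℝ) := by exact_mod_cast hℓ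
  have h2eps : (1:ℝ) ≤ (2:ℝ) ^ ((4:ℝ)/ε) := by
    apply Real.one_le_rpow (by norm_num) (by positivity)
  have hq1 : (1:ℝ) ≤ (q:ℝ) := by nlinarith
  have hq0 : (0:ℝ) < (q:ℝ) := lt_of_lt_of_le one_pos hq1
  have hq2' : (2:ℝ) ^ ((4:ℝ)/ε) ≤ (q:ℝ) := by nlinarith
  set t1 : ℕ := ⌈(R + ε/2) * (n:ℝ)⌉₊ with ht1def
  have ht1n : t1 ≤ n := by
    apply Nat.ceil_le.2
    have hn' : (0:ℝ) < (n:ℝ) := by exact_mod_cast hn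
    nlinarith
  have ht1lb : (R + ε/2) * (n:ℝ) ≤ t1 := Nat.le_ceil _
  set Tz : Finset (Fin n → F) :=
    Finset.univ.filter (fun x => t1 ≤ (agr x (fun _ => ({0} : Finset F))).card) with hTzdef
  set NM := Fintype.card (Matrix (Fin n) (Fin k) F) with hNM
  -- covering by a union over nonzero messages
  have hsub : E
      ⊆ (Finset.univ.filter fun y : Fin k → F => y ≠ 0).biUnion
          (fun y => Finset.univ.filter fun G : Matrix (Fin n) (Fin k) F => G.mulVec y ∈ Tz) := by
    intro G hG
    obtain ⟨y, hy0, hyz⟩ := hE G hG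
    apply Finset.mem_biUnion.2
    refine ⟨y, ?_, ?_⟩
    · apply Finset.mem_filter.2
      refine ⟨Finset.mem_univ _, ?_⟩
      intro h0
      apply hy0
      rw [h0, Matrix.mulVec_zero]
    · apply Finset.mem_filter.2
      refine ⟨Finset.mem_univ _, ?_⟩
      apply Finset.mem_filter.2
      refine ⟨Finset.mem_univ _, ?_⟩
      rw [← zeros_eq_agr]
      exact hyz
  -- exact count per nonzero message
  have hcnt : ∀ y : Fin k → F, y ≠ 0 →
      (Finset.univ.filter fun G : Matrix (Fin n) (Fin k) F => G.mulVec y ∈ Tz).card * q ^ n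
        = Tz.card * NM := by
    intro y hy
    have hyind : LinearIndependent F (fun _ : Fin 1 => y) :=
      linearIndependent_unique_iff.2 hy
    have h := count_matrix_event (n := n) (fun _ : Fin 1 => y) hyind Tz
    have hfix : (Finset.univ.filter fun G : Matrix (Fin n) (Fin k) F =>
        ∀ _j : Fin 1, G.mulVec y ∈ Tz)
        = (Finset.univ.filter fun G : Matrix (Fin n) (Fin k) F => G.mulVec y ∈ Tz) := by
      apply Finset.filter_congr
      intro G _
      constructor
      · intro h'; exact h' 0
      · intro h' _; exact h'
    rw [hfix] at h
    have hN1 : Fintype.card (Fin 1 → Fin n → F) = q ^ n := by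
      rw [Fintype.card_fun, Fintype.card_fun, hF, Fintype.card_fin, Fintype.card_fin, pow_one]
    rw [hN1, pow_one] at h
    exact h
  -- natural-number master bound
  have hmaster : E.card * q ^ n
      ≤ q ^ k * (Tz.card * NM) := by
    calc E.card * q ^ n
        ≤ ((Finset.univ.filter fun y : Fin k → F => y ≠ 0).biUnion
            (fun y => Finset.univ.filter fun G : Matrix (Fin n) (Fin k) F => G.mulVec y ∈ Tz)).card * q ^ n :=
          Nat.mul_le_mul_right _ (Finset.card_le_card hsub)
      _ ≤ (∑ y ∈ Finset.univ.filter (fun y : Fin k → F => y ≠ 0),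
            (Finset.univ.filter fun G : Matrix (Fin n) (Fin k) F => G.mulVec y ∈ Tz).card)
          * q ^ n := Nat.mul_le_mul_right _ Finset.card_biUnion_le
      _ = ∑ y ∈ Finset.univ.filter (fun y : Fin k → F => y ≠ 0),
            ((Finset.univ.filter fun G : Matrix (Fin n) (Fin k) F => G.mulVec y ∈ Tz).card
              * q ^ n) := Finset.sum_mul _ _ _
      _ = ∑ y ∈ Finset.univ.filter (fun y : Fin k → F => y ≠ 0), Tz.card * NM :=
          Finset.sum_congr rfl (fun y hy => hcnt y (Finset.mem_filter.1 hy).2)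
      _ = (Finset.univ.filter (fun y : Fin k → F => y ≠ 0)).card * (Tz.card * NM) := by
          rw [Finset.sum_const, smul_eq_mul]
      _ ≤ q ^ k * (Tz.card * NM) := by
          apply Nat.mul_le_mul_right
          calc (Finset.univ.filter (fun y : Fin k → F => y ≠ 0)).card
              ≤ (Finset.univ : Finset (Fin k → F)).card :=
                Finset.card_le_card (Finset.filter_subset _ _)
            _ = q ^ k := by rw [Finset.card_univ, Fintype.card_fun, hF, Fintype.card_fin]
  -- bound on Tz
  have hTz : Tz.card ≤ n.choose t1 * (1 ^ t1 * q ^ (n - t1)) := by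
    have := count_agr_ge (n := n) (fun _ => ({0} : Finset F)) 1 t1
      (fun _ => by simp)
    rw [hF] at this
    exact this
  have hTz' : (Tz.card : ℝ) ≤ (2:ℝ) ^ (n:ℕ) * (q:ℝ) ^ ((n:ℝ) - t1 : ℝ) := by
    have h1 : (Tz.card : ℝ) ≤ (n.choose t1 : ℝ) * (q:ℝ) ^ ((n - t1 : ℕ):ℕ) := by
      have := hTz
      rw [one_pow, one_mul] at this
      exact_mod_cast this
    have h2 : ((q:ℝ)) ^ ((n - t1 : ℕ):ℕ) = (q:ℝ) ^ ((n:ℝ) - t1 : ℝ) := by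
      rw [← Real.rpow_natCast (q:ℝ) (n - t1)]
      congr 1
      push_cast [Nat.cast_sub ht1n]
      ring
    have h3 : ((n.choose t1 : ℕ) : ℝ) ≤ (2:ℝ) ^ (n:ℕ) := by
      have := choose_le_two_pow n t1
      exact_mod_cast this
    calc (Tz.card : ℝ) ≤ (n.choose t1 : ℝ) * (q:ℝ) ^ ((n - t1 : ℕ):ℕ) := h1
      _ = (n.choose t1 : ℝ) * (q:ℝ) ^ ((n:ℝ) - t1 : ℝ) := by rw [h2]
      _ ≤ (2:ℝ) ^ (n:ℕ) * (q:ℝ) ^ ((n:ℝ) - t1 : ℝ) := by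
          apply mul_le_mul_of_nonneg_right h3 (Real.rpow_nonneg (le_of_lt hq0) _)
  -- real arithmetic
  have hqn : ((q:ℝ)) ^ (n:ℕ) = (q:ℝ) ^ ((n:ℝ) : ℝ) := by
    rw [← Real.rpow_natCast (q:ℝ) n]
  have hqk : ((q:ℝ)) ^ (k:ℕ) = (q:ℝ) ^ (R * (n:ℝ) : ℝ) := by
    rw [← Real.rpow_natCast (q:ℝ) k, hk]
  have h2n : (2:ℝ) ^ (n:ℕ) ≤ (q:ℝ) ^ (ε * (n:ℝ) / 4 : ℝ) := two_pow_le_rpow hε hq2' n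
  -- final exponent computation
  have hexp : (q:ℝ) ^ (R * (n:ℝ) : ℝ) * ((q:ℝ) ^ (ε * (n:ℝ) / 4 : ℝ)
      * (q:ℝ) ^ ((n:ℝ) - t1 : ℝ))
      ≤ (q:ℝ) ^ (-(ε * (n:ℝ)) / 8 : ℝ) * (q:ℝ) ^ ((n:ℝ) : ℝ) := by
    rw [← Real.rpow_add hq0, ← Real.rpow_add hq0, ← Real.rpow_add hq0]
    apply Real.rpow_le_rpow_of_exponent_le hq1
    nlinarith [ht1lb]
  -- put it together
  have hqnpos : (0:ℝ) < (q:ℝ) ^ (n:ℕ) := by positivity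
  apply le_of_mul_le_mul_right _ hqnpos
  have hcast : (E.card : ℝ) * (q:ℝ) ^ (n:ℕ)
      ≤ (q:ℝ) ^ (k:ℕ) * ((Tz.card:ℝ) * (NM:ℝ)) := by
    have hc : ((E.card * q ^ n : ℕ) : ℝ)
        ≤ ((q ^ k * (Tz.card * NM) : ℕ) : ℝ) := Nat.cast_le.2 hmaster
    push_cast at hc
    push_cast
    linarith
  calc (E.card : ℝ) * (q:ℝ) ^ (n:ℕ)
      ≤ (q:ℝ) ^ (k:ℕ) * ((Tz.card:ℝ) * (NM:ℝ)) := hcast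
    _ ≤ (q:ℝ) ^ (k:ℕ) * (((2:ℝ) ^ (n:ℕ) * (q:ℝ) ^ ((n:ℝ) - t1 : ℝ)) * (NM:ℝ)) := by
        apply mul_le_mul_of_nonneg_left _ (by positivity)
        apply mul_le_mul_of_nonneg_right hTz' (Nat.cast_nonneg _)
    _ ≤ (q:ℝ) ^ (k:ℕ) * (((q:ℝ) ^ (ε * (n:ℝ) / 4 : ℝ) * (q:ℝ) ^ ((n:ℝ) - t1 : ℝ)) * (NM:ℝ)) := by
        apply mul_le_mul_of_nonneg_left _ (by positivity)
        apply mul_le_mul_of_nonneg_right _ (Nat.cast_nonneg _)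
        apply mul_le_mul_of_nonneg_right h2n (Real.rpow_nonneg (le_of_lt hq0) _)
    _ = ((q:ℝ) ^ (R * (n:ℝ) : ℝ) * ((q:ℝ) ^ (ε * (n:ℝ) / 4 : ℝ)
          * (q:ℝ) ^ ((n:ℝ) - t1 : ℝ))) * (NM:ℝ) := by rw [hqk]; ring
    _ ≤ ((q:ℝ) ^ (-(ε * (n:ℝ)) / 8 : ℝ) * (q:ℝ) ^ ((n:ℝ) : ℝ)) * (NM:ℝ) := by
        apply mul_le_mul_of_nonneg_right hexp (Nat.cast_nonneg _)
    _ = (q:ℝ) ^ (-(ε * (n:ℝ)) / 8 : ℝ) * (NM:ℝ) * (q:ℝ) ^ (n:ℕ) := by rw [hqn]; ring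

end prob
section prob2
variable {F : Type*} [Field F] [Fintype F] [DecidableEq F]

lemma E2_bound (R ε : ℝ) (hε : 0 < ε) (hR0 : 0 < R) (hcap : 0 < 1 - R - ε)
    (ℓ q : ℕ) (hℓ : 0 < ℓ)
    (hF : Fintype.card F = q)
    (hq1 : ((ℓ : ℝ)) ^ (8 * R / ε + 6 : ℝ) ≤ (q : ℝ))
    (hq2 : (ℓ:ℝ) * (2:ℝ) ^ ((4:ℝ)/ε) ≤ (q:ℝ))
    (n k m : ℕ) (hn : 0 < n) (hk : (k:ℝ) = R * n)
    (hm : 12 * (ℓ:ℝ) / (7 * ε) + 3/14 ≤ (m:ℝ))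
    (E : Finset (Matrix (Fin n) (Fin k) F))
    (hE : ∀ G ∈ E, ∃ S : Fin n → Finset F, (∀ i, (S i).card = ℓ) ∧
      ∃ y : Fin m → (Fin k → F), LinearIndependent F y ∧
        ∀ j, ⌈(R + ε) * (n:ℝ)⌉₊ ≤ (agr (G.mulVec (y j)) S).card) :
    (E.card : ℝ)
      ≤ (q:ℝ) ^ (-(ε * (n:ℝ)) / 8 : ℝ) * (Fintype.card (Matrix (Fin n) (Fin k) F) : ℝ) := by
  classical
  have hl1 : (1:ℝ) ≤ (ℓ:ℝ) := by exact_mod_cast hℓ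
  have hl0 : (0:ℝ) < (ℓ:ℝ) := by exact_mod_cast hℓ
  have h2eps : (1:ℝ) ≤ (2:ℝ) ^ ((4:ℝ)/ε) := Real.one_le_rpow (by norm_num) (by positivity)
  have hq1R : (1:ℝ) ≤ (q:ℝ) := by nlinarith
  have hq0 : (0:ℝ) < (q:ℝ) := lt_of_lt_of_le one_pos hq1R
  have hq2' : (2:ℝ) ^ ((4:ℝ)/ε) ≤ (q:ℝ) := by nlinarith
  have hlq : (ℓ:ℝ) ≤ (q:ℝ) := by nlinarith
  have hn' : (0:ℝ) < (n:ℝ) := by exact_mod_cast hn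
  set t : ℕ := ⌈(R + ε) * (n:ℝ)⌉₊ with htdef
  have htn : t ≤ n := by
    apply Nat.ceil_le.2
    nlinarith
  have htlb : (R + ε) * (n:ℝ) ≤ t := Nat.le_ceil _
  set NM := Fintype.card (Matrix (Fin n) (Fin k) F) with hNM
  set SS : Finset (Fin n → Finset F) :=
    Fintype.piFinset (fun _ : Fin n =>
      (Finset.univ : Finset (Finset F)).filter (fun T => T.card = ℓ)) with hSSdef
  set Y : Finset (Fin m → Fin k → F) :=
    Finset.univ.filter (fun y : Fin m → Fin k → F => LinearIndependent F y) with hYdef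
  have hsub : E ⊆ SS.biUnion (fun S => Y.biUnion (fun y =>
      Finset.univ.filter fun G : Matrix (Fin n) (Fin k) F =>
        ∀ j, G.mulVec (y j) ∈ Finset.univ.filter
          (fun x : Fin n → F => t ≤ (agr x S).card))) := by
    intro G hG
    obtain ⟨S, hScard, y, hyind, hyball⟩ := hE G hG
    apply Finset.mem_biUnion.2
    refine ⟨S, ?_, ?_⟩
    · rw [hSSdef, Fintype.mem_piFinset]
      intro i
      exact Finset.mem_filter.2 ⟨Finset.mem_univ _, hScard i⟩
    · apply Finset.mem_biUnion.2
      refine ⟨y, Finset.mem_filter.2 ⟨Finset.mem_univ _, hyind⟩, ?_⟩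
      apply Finset.mem_filter.2
      refine ⟨Finset.mem_univ _, ?_⟩
      intro j
      exact Finset.mem_filter.2 ⟨Finset.mem_univ _, hyball j⟩
  -- per-pair exact count
  have hcnt : ∀ S : Fin n → Finset F, ∀ y : Fin m → (Fin k → F), LinearIndependent F y →
      (Finset.univ.filter fun G : Matrix (Fin n) (Fin k) F =>
        ∀ j, G.mulVec (y j) ∈ Finset.univ.filter
          (fun x : Fin n → F => t ≤ (agr x S).card)).card * q ^ (n * m)
      = (Finset.univ.filter (fun x : Fin n → F => t ≤ (agr x S).card)).card ^ m * NM := by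
    intro S y hy
    have h := count_matrix_event (n := n) y hy
      (Finset.univ.filter (fun x : Fin n → F => t ≤ (agr x S).card))
    have hNm : Fintype.card (Fin m → Fin n → F) = q ^ (n * m) := by
      rw [Fintype.card_fun, Fintype.card_fun, hF, Fintype.card_fin, Fintype.card_fin,
        ← pow_mul]
    rw [hNm] at h
    exact h
  -- ball size bound
  have hball : ∀ S : Fin n → Finset F, S ∈ SS →
      (Finset.univ.filter (fun x : Fin n → F => t ≤ (agr x S).card)).card
        ≤ n.choose t * (ℓ ^ t * q ^ (n - t)) := by
    intro S hS
    have hScard : ∀ i, (S i).card ≤ ℓ := by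
      intro i
      have := Fintype.mem_piFinset.1 hS i
      exact le_of_eq (Finset.mem_filter.1 this).2
    have := count_agr_ge (n := n) S ℓ t hScard
    rw [hF] at this
    exact this
  -- master natural-number bound
  have hmaster : E.card * q ^ (n * m)
      ≤ q ^ (ℓ * n) * (q ^ (k * m) * ((n.choose t * (ℓ ^ t * q ^ (n - t))) ^ m * NM)) := by
    have hSScard : SS.card ≤ q ^ (ℓ * n) := by
      rw [hSSdef, Fintype.card_piFinset]
      have hc : ((Finset.univ : Finset (Finset F)).filter (fun T => T.card = ℓ)).card
          = q.choose ℓ := by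
        have hps : ((Finset.univ : Finset (Finset F)).filter (fun T => T.card = ℓ))
            = Finset.powersetCard ℓ (Finset.univ : Finset F) := by
          ext T
          simp [Finset.mem_powersetCard]
        rw [hps, Finset.card_powersetCard, Finset.card_univ, hF]
      calc (∏ _i : Fin n, ((Finset.univ : Finset (Finset F)).filter
            (fun T => T.card = ℓ)).card)
          = (q.choose ℓ) ^ n := by rw [Finset.prod_const, hc, Finset.card_univ, Fintype.card_fin]
        _ ≤ (q ^ ℓ) ^ n := Nat.pow_le_pow_left (Nat.choose_le_pow _ _) n
        _ = q ^ (ℓ * n) := by rw [← pow_mul]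
    have hYcard : Y.card ≤ q ^ (k * m) := by
      calc Y.card ≤ (Finset.univ : Finset (Fin m → Fin k → F)).card :=
          Finset.card_le_card (Finset.filter_subset _ _)
        _ = q ^ (k * m) := by
            rw [Finset.card_univ, Fintype.card_fun, Fintype.card_fun, hF, Fintype.card_fin,
              Fintype.card_fin, ← pow_mul]
    calc E.card * q ^ (n * m)
        ≤ (SS.biUnion (fun S => Y.biUnion (fun y =>
            Finset.univ.filter fun G : Matrix (Fin n) (Fin k) F =>
              ∀ j, G.mulVec (y j) ∈ Finset.univ.filter
                (fun x : Fin n → F => t ≤ (agr x S).card)))).card * q ^ (n * m) :=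
          Nat.mul_le_mul_right _ (Finset.card_le_card hsub)
      _ ≤ (∑ S ∈ SS, (Y.biUnion (fun y =>
            Finset.univ.filter fun G : Matrix (Fin n) (Fin k) F =>
              ∀ j, G.mulVec (y j) ∈ Finset.univ.filter
                (fun x : Fin n → F => t ≤ (agr x S).card))).card) * q ^ (n * m) :=
          Nat.mul_le_mul_right _ Finset.card_biUnion_le
      _ ≤ (∑ S ∈ SS, ∑ y ∈ Y,
            (Finset.univ.filter fun G : Matrix (Fin n) (Fin k) F =>
              ∀ j, G.mulVec (y j) ∈ Finset.univ.filter
                (fun x : Fin n → F => t ≤ (agr x S).card)).card) * q ^ (n * m) := by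
          apply Nat.mul_le_mul_right
          apply Finset.sum_le_sum
          intro S _
          exact Finset.card_biUnion_le
      _ = ∑ S ∈ SS, ∑ y ∈ Y,
            ((Finset.univ.filter fun G : Matrix (Fin n) (Fin k) F =>
              ∀ j, G.mulVec (y j) ∈ Finset.univ.filter
                (fun x : Fin n → F => t ≤ (agr x S).card)).card * q ^ (n * m)) := by
          rw [Finset.sum_mul]
          apply Finset.sum_congr rfl
          intro S _
          rw [Finset.sum_mul]
      _ ≤ ∑ S ∈ SS, ∑ _y ∈ Y, ((n.choose t * (ℓ ^ t * q ^ (n - t))) ^ m * NM) := by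
          apply Finset.sum_le_sum
          intro S hS
          apply Finset.sum_le_sum
          intro y hy
          rw [hcnt S y (Finset.mem_filter.1 hy).2]
          apply Nat.mul_le_mul_right
          exact Nat.pow_le_pow_left (hball S hS) m
      _ = SS.card * (Y.card * ((n.choose t * (ℓ ^ t * q ^ (n - t))) ^ m * NM)) := by
          rw [Finset.sum_const, Finset.sum_const, smul_eq_mul, smul_eq_mul]
      _ ≤ q ^ (ℓ * n) * (q ^ (k * m) * ((n.choose t * (ℓ ^ t * q ^ (n - t))) ^ m * NM)) := by
          apply Nat.mul_le_mul hSScard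
          apply Nat.mul_le_mul_right
          exact hYcard
  -- now the real-number estimates
  set D : ℝ := ε * (n:ℝ) / 4 + (ε * (n:ℝ) / 6 + -((R + ε) * (n:ℝ))) + (n:ℝ) with hDdef
  have hCb : ((n.choose t * (ℓ ^ t * q ^ (n - t)) : ℕ) : ℝ) ≤ (q:ℝ) ^ D := by
    have h2n : ((n.choose t : ℕ) : ℝ) ≤ (q:ℝ) ^ (ε * (n:ℝ) / 4 : ℝ) := by
      calc ((n.choose t : ℕ) : ℝ) ≤ ((2:ℕ) ^ n : ℕ) := by exact_mod_cast choose_le_two_pow n t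
        _ = (2:ℝ) ^ (n:ℕ) := by push_cast; ring
        _ ≤ (q:ℝ) ^ (ε * (n:ℝ) / 4 : ℝ) := two_pow_le_rpow hε hq2' n
    have hu1 : (ℓ:ℝ) / (q:ℝ) ≤ 1 := by
      rw [div_le_one hq0]; exact hlq
    have hu0 : (0:ℝ) < (ℓ:ℝ) / (q:ℝ) := by positivity
    have hlt : ((ℓ:ℝ) ^ t * (q:ℝ) ^ ((n - t : ℕ) : ℕ) : ℝ)
        ≤ (q:ℝ) ^ (ε * (n:ℝ) / 6 + -((R + ε) * (n:ℝ)) : ℝ) * (q:ℝ) ^ ((n:ℝ) : ℝ) := by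
      have hsplit : ((ℓ:ℝ) ^ t * (q:ℝ) ^ ((n - t : ℕ) : ℕ) : ℝ)
          = ((ℓ:ℝ) / (q:ℝ)) ^ (t : ℕ) * (q:ℝ) ^ ((n:ℝ) : ℝ) := by
        have hqt : ((q:ℝ)) ^ ((n:ℝ) : ℝ) = (q:ℝ) ^ (n : ℕ) := Real.rpow_natCast (q:ℝ) n
        rw [hqt, div_pow, div_mul_eq_mul_div,
          eq_div_iff (show ((q:ℝ) ^ t) ≠ 0 by positivity)]
        rw [mul_assoc, ← pow_add, Nat.sub_add_cancel htn]
      rw [hsplit]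
      apply mul_le_mul_of_nonneg_right _ (Real.rpow_nonneg (le_of_lt hq0) _)
      have hmono : ((ℓ:ℝ) / (q:ℝ)) ^ (t : ℕ) ≤ ((ℓ:ℝ) / (q:ℝ)) ^ ((R + ε) * (n:ℝ) : ℝ) := by
        rw [← Real.rpow_natCast ((ℓ:ℝ)/(q:ℝ)) t]
        exact Real.rpow_le_rpow_of_exponent_ge hu0 hu1 htlb
      have hnum : ((ℓ:ℝ) / (q:ℝ)) ^ ((R + ε) * (n:ℝ) : ℝ)
          ≤ (q:ℝ) ^ (ε * (n:ℝ) / 6 + -((R + ε) * (n:ℝ)) : ℝ) := by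
        rw [Real.div_rpow (le_of_lt hl0) (le_of_lt hq0)]
        rw [Real.rpow_add hq0]
        rw [div_le_iff₀ (by positivity)]
        rw [mul_assoc, ← Real.rpow_add hq0]
        rw [show (-((R + ε) * (n:ℝ)) + (R + ε) * (n:ℝ)) = 0 by ring, Real.rpow_zero, mul_one]
        -- ℓ^((R+ε)n) ≤ q^(εn/6)
        set a : ℝ := 8 * R / ε + 6 with hadef
        have ha0 : (0:ℝ) < a := by positivity
        have hstep1 : (ℓ:ℝ) ^ ((R + ε) * (n:ℝ) : ℝ)
            = ((ℓ:ℝ) ^ (a : ℝ)) ^ ((R + ε) * (n:ℝ) / a : ℝ) := by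
          rw [← Real.rpow_mul (le_of_lt hl0)]
          congr 1
          field_simp
        have hstep2 : ((ℓ:ℝ) ^ (a : ℝ)) ^ ((R + ε) * (n:ℝ) / a : ℝ)
            ≤ (q:ℝ) ^ ((R + ε) * (n:ℝ) / a : ℝ) :=
          Real.rpow_le_rpow (Real.rpow_nonneg (le_of_lt hl0) _) hq1 (by positivity)
        have hstep3 : (q:ℝ) ^ ((R + ε) * (n:ℝ) / a : ℝ) ≤ (q:ℝ) ^ (ε * (n:ℝ) / 6 : ℝ) := by
          apply Real.rpow_le_rpow_of_exponent_le hq1R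
          rw [hadef, div_le_iff₀ (by positivity : (0:ℝ) < 8 * R / ε + 6)]
          have hcalc : ε * (n:ℝ) / 6 * (8 * R / ε + 6) = (n:ℝ) * (8 * R + 6 * ε) / 6 := by
            field_simp
          rw [hcalc]
          nlinarith
        calc (ℓ:ℝ) ^ ((R + ε) * (n:ℝ) : ℝ)
            = ((ℓ:ℝ) ^ (a : ℝ)) ^ ((R + ε) * (n:ℝ) / a : ℝ) := hstep1
          _ ≤ (q:ℝ) ^ ((R + ε) * (n:ℝ) / a : ℝ) := hstep2
          _ ≤ (q:ℝ) ^ (ε * (n:ℝ) / 6 : ℝ) := hstep3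
      exact le_trans hmono hnum
    calc ((n.choose t * (ℓ ^ t * q ^ (n - t)) : ℕ) : ℝ)
        = ((n.choose t : ℕ) : ℝ) * ((ℓ:ℝ) ^ t * (q:ℝ) ^ ((n - t : ℕ) : ℕ)) := by push_cast; ring
      _ ≤ (q:ℝ) ^ (ε * (n:ℝ) / 4 : ℝ)
          * ((q:ℝ) ^ (ε * (n:ℝ) / 6 + -((R + ε) * (n:ℝ)) : ℝ) * (q:ℝ) ^ ((n:ℝ) : ℝ)) := by
          apply mul_le_mul h2n hlt (by positivity) (Real.rpow_nonneg (le_of_lt hq0) _)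
      _ = (q:ℝ) ^ D := by
          rw [hDdef, ← Real.rpow_add hq0, ← Real.rpow_add hq0]
          congr 1
          ring
  -- final assembly in ℝ
  have hqnm : ((q:ℝ)) ^ ((n * m : ℕ) : ℕ) = (q:ℝ) ^ (((n * m : ℕ)) : ℝ) := by
    rw [← Real.rpow_natCast (q:ℝ) (n * m)]
  have hqnmpos : (0:ℝ) < (q:ℝ) ^ (n * m : ℕ) := by positivity
  apply le_of_mul_le_mul_right _ hqnmpos
  have hcast : (E.card : ℝ) * (q:ℝ) ^ (n * m : ℕ)
      ≤ ((q:ℝ)) ^ ((ℓ * n : ℕ) : ℕ) * (((q:ℝ)) ^ ((k * m : ℕ) : ℕ)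
        * (((n.choose t * (ℓ ^ t * q ^ (n - t)) : ℕ) : ℝ) ^ m * (NM : ℝ))) := by
    have hc := (Nat.cast_le (α := ℝ)).2 hmaster
    push_cast at hc ⊢
    linarith
  have hDm : (((n.choose t * (ℓ ^ t * q ^ (n - t)) : ℕ) : ℝ)) ^ m ≤ (q:ℝ) ^ (D * m : ℝ) := by
    calc (((n.choose t * (ℓ ^ t * q ^ (n - t)) : ℕ) : ℝ)) ^ m ≤ ((q:ℝ) ^ D) ^ m :=
        pow_le_pow_left₀ (Nat.cast_nonneg _) hCb m
      _ = (q:ℝ) ^ (D * m : ℝ) := by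
          rw [← Real.rpow_natCast ((q:ℝ) ^ D) m, ← Real.rpow_mul (le_of_lt hq0)]
  have hexp : ((ℓ * n : ℕ) : ℝ) + (((k * m : ℕ) : ℝ) + D * m)
      ≤ -(ε * (n:ℝ)) / 8 + ((n * m : ℕ) : ℝ) := by
    push_cast
    rw [hDdef]
    have hkR : (k:ℝ) * m = R * (n:ℝ) * m := by rw [hk]
    rw [hkR]
    have hml : (ℓ:ℝ) * n + ε * n / 8 ≤ 7 / 12 * (ε * n) * m := by
      have hpos : (0:ℝ) < 7 / 12 * (ε * n) := by positivity
      have h := mul_le_mul_of_nonneg_left hm (le_of_lt hpos)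
      calc (ℓ:ℝ) * n + ε * n / 8
          = 7 / 12 * (ε * n) * (12 * (ℓ:ℝ) / (7 * ε) + 3/14) := by
            field_simp
            ring
        _ ≤ 7 / 12 * (ε * n) * m := h
    nlinarith [hml]
  calc (E.card : ℝ) * (q:ℝ) ^ (n * m : ℕ)
      ≤ ((q:ℝ)) ^ ((ℓ * n : ℕ) : ℕ) * (((q:ℝ)) ^ ((k * m : ℕ) : ℕ)
        * (((n.choose t * (ℓ ^ t * q ^ (n - t)) : ℕ) : ℝ) ^ m * (NM : ℝ))) := hcast
    _ ≤ ((q:ℝ)) ^ ((ℓ * n : ℕ) : ℕ) * (((q:ℝ)) ^ ((k * m : ℕ) : ℕ)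
        * ((q:ℝ) ^ (D * m : ℝ) * (NM : ℝ))) := by
        apply mul_le_mul_of_nonneg_left _ (by positivity)
        apply mul_le_mul_of_nonneg_left _ (by positivity)
        exact mul_le_mul_of_nonneg_right hDm (Nat.cast_nonneg _)
    _ = (q:ℝ) ^ (((ℓ * n : ℕ) : ℝ) + (((k * m : ℕ) : ℝ) + D * m)) * (NM : ℝ) := by
        rw [Real.rpow_add hq0, Real.rpow_add hq0,
          Real.rpow_natCast (q:ℝ) (ℓ * n), Real.rpow_natCast (q:ℝ) (k * m)]
        ring
    _ ≤ (q:ℝ) ^ (-(ε * (n:ℝ)) / 8 + ((n * m : ℕ) : ℝ)) * (NM : ℝ) := by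
        apply mul_le_mul_of_nonneg_right _ (Nat.cast_nonneg _)
        exact Real.rpow_le_rpow_of_exponent_le hq1R hexp
    _ = (q:ℝ) ^ (-(ε * (n:ℝ)) / 8 : ℝ) * (NM : ℝ) * (q:ℝ) ^ (n * m : ℕ) := by
        rw [Real.rpow_add hq0, Real.rpow_natCast (q:ℝ) (n * m)]
        ring

end prob2

/-- Random linear codes over alphabets of size `q ≥ max(ℓ^{8R/ε+6}, ℓ·2^{4/ε})` achieve
list-recovery capacity with output list size `(2ℓ/ε)^{2ℓ/ε}`, with probability at least
`1 - 2q^{-εn/8}` over the uniformly random generator matrix `G ∈ F_q^{n × Rn}`. -/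
theorem random_linear_codes_achieve_list_recovery_capacity
    (R ε : ℝ) (hR0 : 0 < R) (hR1 : R < 1) (hε : 0 < ε) (hcap : 0 < 1 - R - ε)
    (ℓ : ℕ) (hℓ : 0 < ℓ) (q : ℕ)
    (F : Type*) [Field F] [Fintype F] [DecidableEq F] (hF : Fintype.card F = q)
    (hq1 : ((ℓ : ℝ)) ^ (8 * R / ε + 6 : ℝ) ≤ (q : ℝ))
    (hq2 : (ℓ : ℝ) * (2 : ℝ) ^ (4 / ε : ℝ) ≤ (q : ℝ))
    (n k : ℕ) (hn : 0 < n) (hk : (k : ℝ) = R * n) :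
    1 - 2 * (q : ℝ) ^ (-(ε * (n : ℝ)) / 8 : ℝ) ≤
      (({G : Matrix (Fin n) (Fin k) F |
          ∃ L : ℕ, (L : ℝ) ≤ (2 * (ℓ : ℝ) / ε) ^ (2 * (ℓ : ℝ) / ε) ∧
            ListRecoverable (LinearMap.range (Matrix.mulVecLin G) : Set (Fin n → F))
              (1 - R - ε) ℓ L}).ncard : ℝ) /
        ((Fintype.card (Matrix (Fin n) (Fin k) F)) : ℝ) := by
  classical
  have hl1 : (1:ℝ) ≤ (ℓ:ℝ) := by exact_mod_cast hℓ
  have hε1 : ε < 1 := by linarith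
  have hK : (1:ℝ) ≤ 2 * (ℓ:ℝ) / ε := by
    rw [le_div_iff₀ hε]
    nlinarith
  set m : ℕ := ⌈12 * (ℓ:ℝ) / (7 * ε) + 3/14⌉₊ with hmdef
  have hm : 12 * (ℓ:ℝ) / (7 * ε) + 3/14 ≤ (m:ℝ) := Nat.le_ceil _
  have hm1 : 1 ≤ m := by
    rw [hmdef]
    apply Nat.one_le_iff_ne_zero.2
    intro h0
    have := Nat.ceil_eq_zero.1 h0
    have hpos : (0:ℝ) < 12 * (ℓ:ℝ) / (7 * ε) + 3/14 := by positivity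
    linarith
  have hm2 : (m:ℝ) - 1 ≤ 2 * (ℓ:ℝ) / ε := by
    have hub : (m:ℝ) < 12 * (ℓ:ℝ) / (7 * ε) + 3/14 + 1 := by
      rw [hmdef]
      exact Nat.ceil_lt_add_one (by positivity)
    have hratio : (1:ℝ) ≤ (ℓ:ℝ) / ε := by
      rw [le_div_iff₀ hε]
      nlinarith
    have h12 : 12 * (ℓ:ℝ) / (7 * ε) = (12/7) * ((ℓ:ℝ) / ε) := by ring
    have h2l : 2 * (ℓ:ℝ) / ε = 2 * ((ℓ:ℝ) / ε) := by ring
    have hle : 12 * (ℓ:ℝ) / (7 * ε) + 3/14 ≤ 2 * (ℓ:ℝ) / ε := by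
      rw [h12, h2l]
      nlinarith [hratio]
    linarith
  -- the bad sets
  set E1 : Finset (Matrix (Fin n) (Fin k) F) := Finset.univ.filter (fun G =>
    ∃ y : Fin k → F, G.mulVec y ≠ 0 ∧
      ⌈(R + ε/2) * (n:ℝ)⌉₊ ≤ (Finset.univ.filter fun i => (G.mulVec y) i = (0:F)).card)
    with hE1def
  set E2 : Finset (Matrix (Fin n) (Fin k) F) := Finset.univ.filter (fun G =>
    ∃ S : Fin n → Finset F, (∀ i, (S i).card = ℓ) ∧
      ∃ y : Fin m → (Fin k → F), LinearIndependent F y ∧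
        ∀ j, ⌈(R + ε) * (n:ℝ)⌉₊ ≤ (agr (G.mulVec (y j)) S).card) with hE2def
  have hb1 : (E1.card : ℝ)
      ≤ (q:ℝ) ^ (-(ε * (n:ℝ)) / 8 : ℝ) * (Fintype.card (Matrix (Fin n) (Fin k) F) : ℝ) :=
    E1_bound R ε hε hcap hR0 ℓ q hℓ hF hq2 n k hn hk E1
      (fun G hG => (Finset.mem_filter.1 hG).2)
  have hb2 : (E2.card : ℝ)
      ≤ (q:ℝ) ^ (-(ε * (n:ℝ)) / 8 : ℝ) * (Fintype.card (Matrix (Fin n) (Fin k) F) : ℝ) :=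
    E2_bound R ε hε hR0 hcap ℓ q hℓ hF hq1 hq2 n k m hn hk hm E2
      (fun G hG => (Finset.mem_filter.1 hG).2)
  -- good matrices
  have hgood : ∀ G : Matrix (Fin n) (Fin k) F, G ∉ E1 → G ∉ E2 →
      G ∈ {G : Matrix (Fin n) (Fin k) F |
          ∃ L : ℕ, (L : ℝ) ≤ (2 * (ℓ : ℝ) / ε) ^ (2 * (ℓ : ℝ) / ε) ∧
            ListRecoverable (LinearMap.range (Matrix.mulVecLin G) : Set (Fin n → F))
              (1 - R - ε) ℓ L} := by
    intro G hG1 hG2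
    refine ⟨⌊(2 * (ℓ:ℝ) / ε) ^ (2 * (ℓ:ℝ) / ε)⌋₊,
      Nat.floor_le (Real.rpow_nonneg (by positivity) _), ?_⟩
    apply det_listRecoverable R ε hε hn ℓ hK m hm1 hm2 G
    · -- distance property
      intro c hc hc0
      obtain ⟨y, hy⟩ := LinearMap.mem_range.1 hc
      by_contra hcon
      push_neg at hcon
      apply hG1
      rw [hE1def]
      apply Finset.mem_filter.2
      refine ⟨Finset.mem_univ _, y, ?_, ?_⟩
      · have : G.mulVec y = c := by rw [← Matrix.mulVecLin_apply]; exact hy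
        rw [this]; exact hc0
      · have : G.mulVec y = c := by rw [← Matrix.mulVecLin_apply]; exact hy
        rw [this]
        exact Nat.ceil_le.2 (le_of_lt hcon)
    · -- no m linearly independent codewords in a ball
      intro S hS x hx hxind
      have hxr : ∀ j, ∃ v : Fin k → F, Matrix.mulVecLin G v = x j := by
        intro j
        exact LinearMap.mem_range.1 (hx j).1
      choose y hy using hxr
      have hyind : LinearIndependent F y := by
        apply LinearIndependent.of_comp (Matrix.mulVecLin G)
        have hfun : (⇑(Matrix.mulVecLin G) ∘ y) = x := funext hy
        rw [hfun]
        exact hxind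
      apply hG2
      rw [hE2def]
      apply Finset.mem_filter.2
      refine ⟨Finset.mem_univ _, S, hS, y, hyind, ?_⟩
      intro j
      have hGy : G.mulVec (y j) = x j := by rw [← Matrix.mulVecLin_apply]; exact hy j
      rw [hGy]
      exact Nat.ceil_le.2 (hx j).2
  -- final counting
  set NM := Fintype.card (Matrix (Fin n) (Fin k) F) with hNMdef
  have hNMpos : 0 < NM := Fintype.card_pos
  have hNM' : (0:ℝ) < (NM:ℝ) := by exact_mod_cast hNMpos
  have hsubset : ((Finset.univ \ (E1 ∪ E2) : Finset (Matrix (Fin n) (Fin k) F)) :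
      Set (Matrix (Fin n) (Fin k) F)) ⊆ {G : Matrix (Fin n) (Fin k) F |
          ∃ L : ℕ, (L : ℝ) ≤ (2 * (ℓ : ℝ) / ε) ^ (2 * (ℓ : ℝ) / ε) ∧
            ListRecoverable (LinearMap.range (Matrix.mulVecLin G) : Set (Fin n → F))
              (1 - R - ε) ℓ L} := by
    intro G hG
    have hG' := Finset.mem_sdiff.1 (Finset.mem_coe.1 hG)
    have h12 := hG'.2
    rw [Finset.mem_union] at h12
    push_neg at h12
    exact hgood G h12.1 h12.2
  have hcard1 : ((Finset.univ \ (E1 ∪ E2)).card : ℝ)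
      ≤ (({G : Matrix (Fin n) (Fin k) F |
          ∃ L : ℕ, (L : ℝ) ≤ (2 * (ℓ : ℝ) / ε) ^ (2 * (ℓ : ℝ) / ε) ∧
            ListRecoverable (LinearMap.range (Matrix.mulVecLin G) : Set (Fin n → F))
              (1 - R - ε) ℓ L}).ncard : ℝ) := by
    rw [← Set.ncard_coe_finset]
    exact_mod_cast Set.ncard_le_ncard hsubset (Set.toFinite _)
  have hcard2 : (NM:ℝ) - (E1.card:ℝ) - (E2.card:ℝ)
      ≤ ((Finset.univ \ (E1 ∪ E2)).card : ℝ) := by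
    have hsd := Finset.card_sdiff_of_subset (Finset.subset_univ (E1 ∪ E2))
    have hlu : (E1 ∪ E2).card ≤ (Finset.univ : Finset (Matrix (Fin n) (Fin k) F)).card :=
      Finset.card_le_card (Finset.subset_univ _)
    have hcastsub : (((Finset.univ : Finset (Matrix (Fin n) (Fin k) F)).card
        - (E1 ∪ E2).card : ℕ) : ℝ)
        = ((Finset.univ : Finset (Matrix (Fin n) (Fin k) F)).card : ℝ)
          - ((E1 ∪ E2).card : ℝ) := Nat.cast_sub hlu
    have hle : ((E1 ∪ E2).card : ℝ) ≤ (E1.card : ℝ) + (E2.card : ℝ) := by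
      exact_mod_cast Finset.card_union_le E1 E2
    rw [hsd, hcastsub, Finset.card_univ]
    linarith
  rw [le_div_iff₀ hNM']
  calc (1 - 2 * (q:ℝ) ^ (-(ε * (n:ℝ)) / 8 : ℝ)) * (NM:ℝ)
      = (NM:ℝ) - ((q:ℝ) ^ (-(ε * (n:ℝ)) / 8 : ℝ) * (NM:ℝ)
          + (q:ℝ) ^ (-(ε * (n:ℝ)) / 8 : ℝ) * (NM:ℝ)) := by ring
    _ ≤ (NM:ℝ) - ((E1.card:ℝ) + (E2.card:ℝ)) := by linarith
    _ = (NM:ℝ) - (E1.card:ℝ) - (E2.card:ℝ) := by ring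
    _ ≤ ((Finset.univ \ (E1 ∪ E2)).card : ℝ) := hcard2
    _ ≤ _ := hcard1
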